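/- Let ε ∈ (0,1), let Δ be sufficiently large in terms of ε, and let k satisfy (1-ε)·k·ln k ≥ Δ. Let L₁,…,L_Δ ⊆ {1,…,k} be nonempty lists such that the number of indices i with |L_i| ≤ 5/ε is at most εk/5. Then there exists a choice σ(i) ∈ L_i for each i ∈ {1,…,Δ} such that |{1,…,k} \ {σ(i) : i ∈ [Δ]}| ≥ Δ^{ε/2}. -/

import Mathlib

open Real Finset

set_option maxHeartbeats 1000000

/-- Ratio bound for binomial coefficients: C(g, t-m)·(g-t+1)^m ≤ C(g,t)·t^m. -/
lemma choose_ratio_aux (g t : ℕ) (ht : t ≤ g) :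
    ∀ m, m ≤ t → Nat.choose g (t - m) * (g - t + 1) ^ m ≤ Nat.choose g t * t ^ m := by
  intro m
  induction m with
  | zero => simp
  | succ m ih =>
    intro hm
    have hm' : m ≤ t := Nat.le_of_succ_le hm
    have key : Nat.choose g (t - (m + 1)) * (g - t + 1) ≤ Nat.choose g (t - m) * t := by
      have h1 : Nat.choose g ((t - (m+1)) + 1) * ((t - (m+1)) + 1)
          = Nat.choose g (t - (m+1)) * (g - (t - (m+1))) :=
        Nat.choose_succ_right_eq g (t - (m+1))
      have e1 : (t - (m+1)) + 1 = t - m := by omega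
      rw [e1] at h1
      calc Nat.choose g (t - (m + 1)) * (g - t + 1)
          ≤ Nat.choose g (t - (m+1)) * (g - (t - (m+1))) := by
            apply Nat.mul_le_mul_left; omega
        _ = Nat.choose g (t - m) * (t - m) := h1.symm
        _ ≤ Nat.choose g (t - m) * t := by apply Nat.mul_le_mul_left; omega
    calc Nat.choose g (t - (m + 1)) * (g - t + 1) ^ (m + 1)
        = (Nat.choose g (t - (m + 1)) * (g - t + 1)) * (g - t + 1) ^ m := by ring
      _ ≤ (Nat.choose g (t - m) * t) * (g - t + 1) ^ m := Nat.mul_le_mul_right _ key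
      _ = (Nat.choose g (t - m) * (g - t + 1) ^ m) * t := by ring
      _ ≤ (Nat.choose g t * t ^ m) * t := Nat.mul_le_mul_right _ (ih hm')
      _ = Nat.choose g t * t ^ (m + 1) := by ring

theorem stmt_19 (ε : ℝ) (hε0 : 0 < ε) (hε1 : ε < 1) :
    ∃ Δ₀ : ℕ, ∀ Δ : ℕ, Δ₀ ≤ Δ → ∀ k : ℕ, (Δ : ℝ) ≤ (1 - ε) * k * Real.log k →
    ∀ L : Fin Δ → Finset ℕ, (∀ i, (L i).Nonempty) → (∀ i, L i ⊆ Finset.Icc 1 k) →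
      ((Finset.univ.filter
          (fun i : Fin Δ => ((L i).card : ℝ) ≤ 5 / ε)).card : ℝ) ≤ ε * k / 5 →
      ∃ σ : Fin Δ → ℕ, (∀ i, σ i ∈ L i) ∧
        (Δ : ℝ) ^ (ε / 2) ≤
          (((Finset.Icc 1 k).filter (fun c => ∀ i : Fin Δ, σ i ≠ c)).card : ℝ) := by
  -- choose the threshold Δ₀
  have hev : ∀ᶠ x : ℝ in Filter.atTop,
      5 * Real.log x ≤ x ^ ((3:ℝ)/10) ∧ 5/ε + 1 ≤ x ^ (ε/2) := by
    have h1 : ∀ᶠ x : ℝ in Filter.atTop, 5 * Real.log x ≤ x ^ ((3:ℝ)/10) := by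
      have := (isLittleO_log_rpow_atTop (by norm_num : (0:ℝ) < 3/10)).def
        (by norm_num : (0:ℝ) < 1/5)
      filter_upwards [this, Filter.eventually_ge_atTop (1:ℝ)] with x hx hx1
      have hlog : 0 ≤ Real.log x := Real.log_nonneg hx1
      have hr : 0 ≤ x ^ ((3:ℝ)/10) := Real.rpow_nonneg (by linarith) _
      rw [Real.norm_eq_abs, Real.norm_eq_abs, abs_of_nonneg hlog, abs_of_nonneg hr] at hx
      linarith
    have h2 : ∀ᶠ x : ℝ in Filter.atTop, 5/ε + 1 ≤ x ^ (ε/2) :=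
      (tendsto_rpow_atTop (by linarith : (0:ℝ) < ε/2)).eventually_ge_atTop (5/ε + 1)
    exact h1.and h2
  obtain ⟨a, ha⟩ := Filter.eventually_atTop.mp hev
  refine ⟨max 3 ⌈a⌉₊, ?_⟩
  intro Δ hΔ₀ k hk L hLne hLsub hsmall
  have hΔ3 : 3 ≤ Δ := le_trans (le_max_left _ _) hΔ₀
  have hΔa : a ≤ (Δ : ℝ) := by
    have : (⌈a⌉₊ : ℝ) ≤ Δ := Nat.cast_le.mpr (le_trans (le_max_right _ _) hΔ₀)
    exact le_trans (Nat.le_ceil a) this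
  obtain ⟨hlogΔ, hrpowΔ⟩ := ha _ hΔa
  have hΔ1 : (1:ℝ) ≤ Δ := by exact_mod_cast le_trans (by norm_num) hΔ3
  have hΔ3R : (3:ℝ) ≤ Δ := by exact_mod_cast hΔ3
  have hΔpos : (0:ℝ) < Δ := by linarith
  -- k ≥ 2
  have hk2 : 2 ≤ k := by
    by_contra h
    push_neg at h
    interval_cases k <;> simp_all <;> nlinarith [hΔ3R]
  have hk1R : (1:ℝ) < k := by exact_mod_cast hk2
  have hlogk : 0 < Real.log k := Real.log_pos hk1R
  have hkpos : (0:ℝ) < k := by linarith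
  -- log Δ ≥ 1
  have hlogΔ1 : 1 ≤ Real.log Δ := by
    rw [Real.le_log_iff_exp_le hΔpos]
    calc Real.exp 1 ≤ 2.7182818286 := le_of_lt Real.exp_one_lt_d9
      _ ≤ 3 := by norm_num
      _ ≤ Δ := hΔ3R
  have hlogΔpos : 0 < Real.log Δ := by linarith
  -- k ≥ Δ / log Δ
  have hkΔ : (Δ:ℝ) / Real.log Δ ≤ k := by
    rcases le_or_gt (k:ℝ) (Δ:ℝ) with hkd | hkd
    · have hlk : Real.log k ≤ Real.log Δ := Real.log_le_log hkpos hkd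
      have : (Δ:ℝ) ≤ k * Real.log Δ := by nlinarith
      rw [div_le_iff₀ hlogΔpos]
      nlinarith
    · calc (Δ:ℝ) / Real.log Δ ≤ Δ / 1 := by
            apply div_le_div_of_nonneg_left (by linarith) (by norm_num) hlogΔ1
        _ = Δ := div_one _
        _ ≤ k := le_of_lt hkd
  classical
  -- definitions
  set m0 : ℕ := ⌊5/ε⌋₊ + 1 with hm0def
  set t : ℕ := ⌈(Δ:ℝ) ^ (ε/2)⌉₊ with htdef
  set small : Finset (Fin Δ) :=
    Finset.univ.filter (fun i : Fin Δ => ((L i).card : ℝ) ≤ 5 / ε) with hsmalldef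
  set pick : Fin Δ → ℕ := fun i => (L i).min' (hLne i) with hpickdef
  have hpickmem : ∀ i, pick i ∈ L i := fun i => (L i).min'_mem (hLne i)
  set B : Finset ℕ := small.image pick with hBdef
  set G : Finset ℕ := (Finset.Icc 1 k) \ B with hGdef
  set g : ℕ := G.card with hgdef
  -- bounds on t
  have hrpow_nonneg : (0:ℝ) ≤ (Δ:ℝ) ^ (ε/2) := Real.rpow_nonneg (le_of_lt hΔpos) _
  have hrpow_one : (1:ℝ) ≤ (Δ:ℝ) ^ (ε/2) := Real.one_le_rpow hΔ1 (by linarith)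
  have htlow : (Δ:ℝ) ^ (ε/2) ≤ t := Nat.le_ceil _
  have htup : (t:ℝ) ≤ 2 * (Δ:ℝ) ^ (ε/2) := by
    have := Nat.ceil_lt_add_one hrpow_nonneg
    rw [← htdef] at this
    linarith
  have ht1 : 1 ≤ t := by
    have : (0:ℝ) < t := by linarith
    exact_mod_cast Nat.one_le_iff_ne_zero.mpr (by positivity)
  -- m0 ≤ t
  have hm0R : (m0:ℝ) ≤ 5/ε + 1 := by
    rw [hm0def]
    push_cast
    have : (⌊5/ε⌋₊ : ℝ) ≤ 5/ε := Nat.floor_le (by positivity)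
    linarith
  have hm0gt : 5/ε < (m0:ℝ) := by
    rw [hm0def]; push_cast; exact Nat.lt_floor_add_one _
  have hm0t : m0 ≤ t := by
    have : (m0:ℝ) ≤ t := le_trans hm0R (le_trans hrpowΔ htlow)
    exact_mod_cast this
  have hm0pos : 0 < m0 := Nat.succ_pos _
  -- size of G
  have hBcard : (B.card : ℝ) ≤ ε * k / 5 := by
    have : B.card ≤ small.card := Finset.card_image_le
    calc (B.card : ℝ) ≤ small.card := by exact_mod_cast this
      _ ≤ ε * k / 5 := hsmall
  have hIcc : (Finset.Icc 1 k).card = k := by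
    rw [Nat.card_Icc]; omega
  have hgk : (k:ℝ) - ε * k / 5 ≤ g := by
    have h1 : (Finset.Icc 1 k).card ≤ G.card + B.card :=
      Finset.card_le_card_sdiff_add_card
    rw [hIcc] at h1
    have h1' : (k:ℝ) ≤ (g:ℝ) + B.card := by exact_mod_cast h1
    linarith
  have hg45 : (4/5:ℝ) * k ≤ g := by nlinarith
  -- master inequality
  have hmaster : (Δ:ℝ) ^ (ε/5) * t + t ≤ g := by
    have e1 : (Δ:ℝ) ^ (ε/5) * (Δ:ℝ) ^ (ε/2) = (Δ:ℝ) ^ (7*ε/10) := by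
      rw [← Real.rpow_add hΔpos]; ring_nf
    have h1 : (Δ:ℝ) ^ (ε/5) * t ≤ 2 * (Δ:ℝ) ^ (7*ε/10) := by
      have hp : (0:ℝ) ≤ (Δ:ℝ) ^ (ε/5) := Real.rpow_nonneg (le_of_lt hΔpos) _
      calc (Δ:ℝ) ^ (ε/5) * t ≤ (Δ:ℝ) ^ (ε/5) * (2 * (Δ:ℝ) ^ (ε/2)) :=
            mul_le_mul_of_nonneg_left htup hp
        _ = 2 * (Δ:ℝ) ^ (7*ε/10) := by rw [← e1]; ring
    have h2 : (t:ℝ) ≤ 2 * (Δ:ℝ) ^ (7*ε/10) := by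
      have : (Δ:ℝ) ^ (ε/2) ≤ (Δ:ℝ) ^ (7*ε/10) :=
        Real.rpow_le_rpow_of_exponent_le hΔ1 (by linarith)
      linarith
    have h3 : (Δ:ℝ) ^ (7*ε/10) ≤ (Δ:ℝ) ^ ((7:ℝ)/10) :=
      Real.rpow_le_rpow_of_exponent_le hΔ1 (by nlinarith)
    have h4 : 5 * (Δ:ℝ) ^ ((7:ℝ)/10) * Real.log Δ ≤ Δ := by
      have e2 : (Δ:ℝ) ^ ((7:ℝ)/10) * (Δ:ℝ) ^ ((3:ℝ)/10) = Δ := by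
        rw [← Real.rpow_add hΔpos]; norm_num
      have hp : (0:ℝ) ≤ (Δ:ℝ) ^ ((7:ℝ)/10) := Real.rpow_nonneg (le_of_lt hΔpos) _
      calc 5 * (Δ:ℝ) ^ ((7:ℝ)/10) * Real.log Δ
          = (Δ:ℝ) ^ ((7:ℝ)/10) * (5 * Real.log Δ) := by ring
        _ ≤ (Δ:ℝ) ^ ((7:ℝ)/10) * (Δ:ℝ) ^ ((3:ℝ)/10) :=
            mul_le_mul_of_nonneg_left hlogΔ hp
        _ = Δ := e2
    have h5 : 4 * (Δ:ℝ) ^ ((7:ℝ)/10) ≤ (4/5) * (Δ / Real.log Δ) := by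
      rw [mul_div_assoc', le_div_iff₀ hlogΔpos]
      nlinarith [Real.rpow_nonneg (le_of_lt hΔpos) ((7:ℝ)/10)]
    have h6 : (4/5:ℝ) * (Δ / Real.log Δ) ≤ (4/5) * k := by
      apply mul_le_mul_of_nonneg_left hkΔ (by norm_num)
    calc (Δ:ℝ) ^ (ε/5) * t + t ≤ 4 * (Δ:ℝ) ^ (7*ε/10) := by linarith
      _ ≤ 4 * (Δ:ℝ) ^ ((7:ℝ)/10) := by linarith
      _ ≤ g := by linarith
  have htg : t ≤ g := by
    have hp : (0:ℝ) ≤ (Δ:ℝ) ^ (ε/5) * t := by positivity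
    have : (t:ℝ) ≤ g := by linarith
    exact_mod_cast this
  -- the key numeric inequality in ℕ
  have hkey : Δ * t ^ m0 < (g - t + 1) ^ m0 := by
    have hcast : ((g - t + 1 : ℕ) : ℝ) = (g:ℝ) - t + 1 := by
      push_cast [Nat.cast_sub htg]; ring
    have hΔle : (Δ:ℝ) ≤ ((Δ:ℝ) ^ (ε/5)) ^ m0 := by
      rw [← Real.rpow_natCast ((Δ:ℝ) ^ (ε/5)) m0, ← Real.rpow_mul (le_of_lt hΔpos)]
      nth_rewrite 1 [← Real.rpow_one (Δ:ℝ)]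
      apply Real.rpow_le_rpow_of_exponent_le hΔ1
      rw [div_mul_eq_mul_div, le_div_iff₀ (by norm_num : (0:ℝ) < 5)]
      calc (1:ℝ) * 5 = 5 := by ring
        _ ≤ ε * (5/ε) := by rw [mul_div_cancel₀]; exact ne_of_gt hε0
        _ ≤ ε * m0 := mul_le_mul_of_nonneg_left (le_of_lt hm0gt) (le_of_lt hε0)
    have hstrict : (Δ:ℝ) ^ (ε/5) * t < (g:ℝ) - t + 1 := by linarith
    have hRHS : ((Δ:ℝ) ^ (ε/5) * t) ^ m0 < ((g:ℝ) - t + 1) ^ m0 := by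
      exact pow_lt_pow_left₀ hstrict (by positivity) (by omega)
    have : (Δ:ℝ) * (t:ℝ) ^ m0 < ((g:ℝ) - t + 1) ^ m0 := by
      calc (Δ:ℝ) * (t:ℝ) ^ m0 ≤ ((Δ:ℝ) ^ (ε/5)) ^ m0 * (t:ℝ) ^ m0 :=
            mul_le_mul_of_nonneg_right hΔle (by positivity)
        _ = ((Δ:ℝ) ^ (ε/5) * t) ^ m0 := (mul_pow _ _ _).symm
        _ < ((g:ℝ) - t + 1) ^ m0 := hRHS
    have hfin : ((Δ * t ^ m0 : ℕ) : ℝ) < (((g - t + 1) ^ m0 : ℕ) : ℝ) := by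
      push_cast [Nat.cast_sub htg]
      linarith [this]
    exact_mod_cast hfin
  -- per-index bound on "bad" sets
  have hbadi : ∀ i : Fin Δ, i ∉ small →
      ((G.powersetCard t).filter (fun U => L i ⊆ U)).card ≤ Nat.choose g (t - m0) := by
    intro i hi
    have hcard : m0 ≤ (L i).card := by
      rw [hsmalldef, Finset.mem_filter] at hi
      push_neg at hi
      have := hi (Finset.mem_univ i)
      have h1 : 5/ε < ((L i).card : ℝ) := this
      have h2 : (⌊5/ε⌋₊ : ℕ) < (L i).card := by
        have := Nat.floor_le (le_of_lt (by positivity : (0:ℝ) < 5/ε))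
        exact_mod_cast lt_of_le_of_lt this h1
      omega
    obtain ⟨L', hL'sub, hL'card⟩ := Finset.exists_subset_card_eq hcard
    have hinj : ((G.powersetCard t).filter (fun U => L i ⊆ U)).card
        ≤ (G.powersetCard (t - m0)).card :=
      Finset.card_le_card_of_injOn (fun U => U \ L')
      (fun U hU => by
        rw [Finset.mem_coe, Finset.mem_filter, Finset.mem_powersetCard] at hU
        obtain ⟨⟨hUG, hUcard⟩, hLiU⟩ := hU
        have hL'U : L' ⊆ U := hL'sub.trans hLiU
        rw [Finset.mem_coe, Finset.mem_powersetCard]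
        constructor
        · exact (Finset.sdiff_subset).trans hUG
        · rw [Finset.card_sdiff_of_subset hL'U, hUcard, hL'card])
      (fun U1 hU1 U2 hU2 heq => by
        simp only [Finset.coe_filter, Set.mem_setOf_eq, Finset.mem_powersetCard] at hU1 hU2
        have h1 : L' ⊆ U1 := hL'sub.trans hU1.2
        have h2 : L' ⊆ U2 := hL'sub.trans hU2.2
        have := congrArg (· ∪ L') heq
        simpa [Finset.sdiff_union_of_subset h1, Finset.sdiff_union_of_subset h2] using this)
    calc ((G.powersetCard t).filter (fun U => L i ⊆ U)).card
        ≤ (G.powersetCard (t - m0)).card := hinj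
      _ = Nat.choose g (t - m0) := Finset.card_powersetCard _ _
  -- total bad count
  set Bad : Finset (Finset ℕ) :=
    (G.powersetCard t).filter (fun U => ∃ i : Fin Δ, i ∉ small ∧ L i ⊆ U) with hBaddef
  have hBadcard : Bad.card < (G.powersetCard t).card := by
    have hsub : Bad ⊆ (Finset.univ.filter (fun i : Fin Δ => i ∉ small)).biUnion
        (fun i => (G.powersetCard t).filter (fun U => L i ⊆ U)) := by
      intro U hU
      rw [hBaddef, Finset.mem_filter] at hU
      obtain ⟨hU1, i, hi, hLU⟩ := hU
      rw [Finset.mem_biUnion]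
      exact ⟨i, Finset.mem_filter.mpr ⟨Finset.mem_univ i, hi⟩,
        Finset.mem_filter.mpr ⟨hU1, hLU⟩⟩
    have h1 : Bad.card ≤ Δ * Nat.choose g (t - m0) := by
      calc Bad.card ≤ ((Finset.univ.filter (fun i : Fin Δ => i ∉ small)).biUnion
            (fun i => (G.powersetCard t).filter (fun U => L i ⊆ U))).card :=
            Finset.card_le_card hsub
        _ ≤ ∑ i ∈ Finset.univ.filter (fun i : Fin Δ => i ∉ small),
            ((G.powersetCard t).filter (fun U => L i ⊆ U)).card :=
            Finset.card_biUnion_le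
        _ ≤ ∑ _i ∈ Finset.univ.filter (fun i : Fin Δ => i ∉ small),
            Nat.choose g (t - m0) := by
            apply Finset.sum_le_sum
            intro i hi
            exact hbadi i (Finset.mem_filter.mp hi).2
        _ = (Finset.univ.filter (fun i : Fin Δ => i ∉ small)).card
            * Nat.choose g (t - m0) := by rw [Finset.sum_const, smul_eq_mul]
        _ ≤ Δ * Nat.choose g (t - m0) := by
            apply Nat.mul_le_mul_right
            calc (Finset.univ.filter (fun i : Fin Δ => i ∉ small)).card
                ≤ (Finset.univ : Finset (Fin Δ)).card := Finset.card_filter_le _ _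
              _ = Δ := Finset.card_univ.trans (Fintype.card_fin Δ)
    have h2 : Δ * Nat.choose g (t - m0) < Nat.choose g t := by
      have hratio := choose_ratio_aux g t htg m0 hm0t
      have hpos : 0 < Nat.choose g (t - m0) := Nat.choose_pos (by omega)
      have htpos : 0 < t ^ m0 := Nat.pow_pos (by omega)
      apply Nat.lt_of_mul_lt_mul_right (a := t ^ m0)
      calc Δ * Nat.choose g (t - m0) * t ^ m0
          = Nat.choose g (t - m0) * (Δ * t ^ m0) := by ring
        _ < Nat.choose g (t - m0) * (g - t + 1) ^ m0 :=
            mul_lt_mul_of_pos_left hkey hpos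
        _ ≤ Nat.choose g t * t ^ m0 := hratio
    calc Bad.card ≤ Δ * Nat.choose g (t - m0) := h1
      _ < Nat.choose g t := h2
      _ = (G.powersetCard t).card := (Finset.card_powersetCard _ _).symm
  -- extract a good U
  have hexU : ∃ U ∈ G.powersetCard t, U ∉ Bad := by
    by_contra h
    push_neg at h
    have : (G.powersetCard t) ⊆ Bad := h
    exact absurd (Finset.card_le_card this) (by omega)
  obtain ⟨U, hUmem, hUnotbad⟩ := hexU
  rw [Finset.mem_powersetCard] at hUmem
  obtain ⟨hUG, hUcard⟩ := hUmem
  -- every large list has an element outside U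
  have hlarge : ∀ i : Fin Δ, i ∉ small → (L i \ U).Nonempty := by
    intro i hi
    by_contra h
    rw [Finset.not_nonempty_iff_eq_empty, Finset.sdiff_eq_empty_iff_subset] at h
    exact hUnotbad (Finset.mem_filter.mpr
      ⟨Finset.mem_powersetCard.mpr ⟨hUG, hUcard⟩, i, hi, h⟩)
  -- define σ
  set σ : Fin Δ → ℕ := fun i =>
    if h : i ∈ small then pick i
    else (L i \ U).min' (hlarge i h) with hσdef
  have hσmem : ∀ i, σ i ∈ L i := by
    intro i
    rw [hσdef]
    by_cases h : i ∈ small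
    · simp only [dif_pos h]; exact hpickmem i
    · simp only [dif_neg h]
      exact (Finset.mem_sdiff.mp ((L i \ U).min'_mem (hlarge i h))).1
  have hσnotU : ∀ i, σ i ∉ U := by
    intro i
    rw [hσdef]
    by_cases h : i ∈ small
    · simp only [dif_pos h]
      intro hmem
      have hcU : pick i ∈ G := hUG hmem
      rw [hGdef, Finset.mem_sdiff] at hcU
      exact hcU.2 (Finset.mem_image_of_mem pick h)
    · simp only [dif_neg h]
      exact (Finset.mem_sdiff.mp ((L i \ U).min'_mem (hlarge i h))).2
  refine ⟨σ, hσmem, ?_⟩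
  have hUsub : U ⊆ (Finset.Icc 1 k).filter (fun c => ∀ i : Fin Δ, σ i ≠ c) := by
    intro c hc
    rw [Finset.mem_filter]
    constructor
    · exact (Finset.sdiff_subset) (hUG hc)
    · intro i heq
      exact hσnotU i (heq ▸ hc)
  calc (Δ:ℝ) ^ (ε/2) ≤ t := htlow
    _ = (U.card : ℝ) := by rw [hUcard]
    _ ≤ _ := by exact_mod_cast Nat.cast_le.mpr (Finset.card_le_card hUsub)
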